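/- Single-policy coverage implies small inverse-covariance norm (core of Proposition C.1): let v ∈ ℝ^d with ‖v‖ ≤ B for some B > 0, let c > 0 and n > 0, and let Σ ∈ ℝ^{d×d} be a symmetric matrix satisfying Σ ⪰ B²·I + c·n·v v^⊤ in the positive semidefinite (Loewner) order. Then Σ is positive definite and ‖v‖_{Σ^{-1}} ≤ √(d/(c·n)). -/

import Mathlib

open Finset Matrix

/-- The matrix-weighted norm ‖v‖_M = √(vᵀ M v). -/
noncomputable def matNorm {d : ℕ} (M : Matrix (Fin d) (Fin d) ℝ) (v : Fin d → ℝ) : ℝ :=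
  Real.sqrt (v ⬝ᵥ M.mulVec v)

lemma quad_vecMulVec {d : ℕ} (v x : Fin d → ℝ) :
    x ⬝ᵥ (vecMulVec v v).mulVec x = (v ⬝ᵥ x) * (v ⬝ᵥ x) := by
  simp only [dotProduct, mulVec, vecMulVec_apply, Finset.mul_sum, Finset.sum_mul]
  rw [Finset.sum_comm]
  exact Finset.sum_congr rfl fun i _ => Finset.sum_congr rfl fun j _ => by ring

theorem coverage_implies_small_inverse_norm
    {d : ℕ} (v : Fin d → ℝ) (B : ℝ) (hB : 0 < B)
    (hv : Real.sqrt (v ⬝ᵥ v) ≤ B)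
    (c n : ℝ) (hc : 0 < c) (hn : 0 < n)
    (Sig : Matrix (Fin d) (Fin d) ℝ) (hsym : Sig.IsSymm)
    (hLoewner : (Sig - (B ^ 2 • (1 : Matrix (Fin d) (Fin d) ℝ)
      + (c * n) • vecMulVec v v)).PosSemidef) :
    Sig.PosDef ∧ matNorm Sig⁻¹ v ≤ Real.sqrt (d / (c * n)) := by
  have hcn : 0 < c * n := mul_pos hc hn
  set A : Matrix (Fin d) (Fin d) ℝ :=
    B ^ 2 • (1 : Matrix (Fin d) (Fin d) ℝ) + (c * n) • vecMulVec v v with hA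
  have hA1 : (B ^ 2 • (1 : Matrix (Fin d) (Fin d) ℝ)).PosDef := by
    refine Matrix.PosDef.of_dotProduct_mulVec_pos ?_ ?_
    · simp [Matrix.IsHermitian, conjTranspose_smul]
    · intro x hx
      have hxx : 0 < x ⬝ᵥ x := by
        have := Matrix.dotProduct_star_self_pos_iff (v := x) (R := ℝ)
        simpa [star_trivial] using this.mpr hx
      simp only [smul_mulVec, one_mulVec, dotProduct_smul, smul_eq_mul, star_trivial]
      positivity
  have hA2 : ((c * n) • vecMulVec v v).PosSemidef := by
    refine Matrix.PosSemidef.of_dotProduct_mulVec_nonneg ?_ ?_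
    · show _ᴴ = _
      ext i j
      simp [conjTranspose_apply, vecMulVec_apply, mul_comm]
    · intro x
      rw [star_trivial, smul_mulVec, dotProduct_smul, quad_vecMulVec, smul_eq_mul]
      exact mul_nonneg hcn.le (mul_self_nonneg _)
  have hApos : A.PosDef := hA1.add_posSemidef hA2
  have hSigPD : Sig.PosDef := by
    have : ((Sig - A) + A).PosDef := Matrix.PosDef.posSemidef_add hLoewner hApos
    simpa using this
  refine ⟨hSigPD, ?_⟩
  set x : Fin d → ℝ := Sig⁻¹ *ᵥ v with hx
  set t : ℝ := v ⬝ᵥ Sig⁻¹ *ᵥ v with ht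
  have hSigx : Sig *ᵥ x = v := by
    rw [hx, mulVec_mulVec, Matrix.mul_nonsing_inv _ (isUnit_iff_ne_zero.mpr hSigPD.det_pos.ne'), one_mulVec]
  have ht0 : 0 ≤ t := by
    have := hSigPD.inv.posSemidef.dotProduct_mulVec_nonneg v
    simpa [star_trivial] using this
  have hxv : x ⬝ᵥ v = t := by
    rw [dotProduct_comm]
  have hvx : v ⬝ᵥ x = t := rfl
  have key : 0 ≤ x ⬝ᵥ (Sig - A) *ᵥ x := by
    have := hLoewner.dotProduct_mulVec_nonneg x
    simpa [star_trivial] using this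
  have hxx0 : 0 ≤ x ⬝ᵥ x := by
    have := dotProduct_star_self_nonneg x (R := ℝ)
    simpa [star_trivial] using this
  have expand : x ⬝ᵥ (Sig - A) *ᵥ x
      = t - (B ^ 2 * (x ⬝ᵥ x) + (c * n) * (t * t)) := by
    rw [sub_mulVec, dotProduct_sub, hSigx, hxv, hA, add_mulVec, dotProduct_add,
      smul_mulVec, one_mulVec, dotProduct_smul, smul_mulVec, dotProduct_smul,
      quad_vecMulVec, hvx, smul_eq_mul, smul_eq_mul]
  have hquad : c * n * (t * t) ≤ t := by
    rw [expand] at key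
    nlinarith [sq_nonneg B, mul_nonneg (sq_nonneg B) hxx0]
  have htle : t ≤ d / (c * n) := by
    rcases Nat.eq_zero_or_pos d with hd | hd
    · subst hd
      have : t = 0 := by simp [ht, dotProduct]
      simp [this]
    · have h1 : t ≤ 1 / (c * n) := by
        rw [le_div_iff₀ hcn]
        nlinarith
      refine h1.trans ?_
      have hd1 : (1:ℝ) ≤ d := by exact_mod_cast hd
      gcongr
  have : matNorm Sig⁻¹ v = Real.sqrt t := rfl
  rw [this]
  exact Real.sqrt_le_sqrt htle
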